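/- arXiv:1308.5856 — 4 statements merged into one kernel-verified Lean document; each statement's English description precedes it below -/
import Mathlib

section
/- Let G be a group and u_1, ..., u_{g-1} elements satisfying the braid relations, with Δ_g the fundamental element (Δ_1 = 1, Δ_m = (u_1 ⋯ u_{m-1}) Δ_{m-1}). Then Δ_g² = u_{g-1}² (u_{g-2} u_{g-1}² u_{g-2}) (u_{g-3} u_{g-2} u_{g-1}² u_{g-2} u_{g-3}) ⋯ (u_1 u_2 ⋯ u_{g-1}² ⋯ u_2 u_1), where the i-th factor from the left is (u_{g-i} ⋯ u_{g-2}) u_{g-1}² (u_{g-2} ⋯ u_{g-i}). -/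
variable {G : Type*} [Group G]

/-- `prodAsc f m = f 1 * f 2 * ⋯ * f m` (empty product for `m = 0`). -/
def prodAsc (f : ℕ → G) (m : ℕ) : G :=
  ((List.range m).map (fun i => f (i + 1))).prod

/-- `prodDesc f m = f m * ⋯ * f 2 * f 1` (empty product for `m = 0`). -/
def prodDesc (f : ℕ → G) (m : ℕ) : G :=
  (((List.range m).reverse).map (fun i => f (i + 1))).prod

/-- The fundamental braid element: `Δ 0 = Δ 1 = 1`, `Δ (m+1) = (u 1 ⋯ u m) * Δ m`. -/
def braidDelta (u : ℕ → G) : ℕ → G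
  | 0 => 1
  | m + 1 => prodAsc u m * braidDelta u m

lemma prodAsc_zero (u : ℕ → G) : prodAsc u 0 = 1 := rfl

lemma prodDesc_zero (u : ℕ → G) : prodDesc u 0 = 1 := rfl

lemma prodAsc_succ (u : ℕ → G) (m : ℕ) : prodAsc u (m+1) = prodAsc u m * u (m+1) := by
  simp [prodAsc, List.range_succ]

lemma prodAsc_succ_left (u : ℕ → G) (m : ℕ) :
    prodAsc u (m+1) = u 1 * prodAsc (fun i => u (i+1)) m := by
  simp only [prodAsc, List.range_succ_eq_map, List.map_map, List.prod_cons, List.map_cons]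
  rfl

lemma prodDesc_succ (u : ℕ → G) (m : ℕ) : prodDesc u (m+1) = u (m+1) * prodDesc u m := by
  simp [prodDesc, List.range_succ]

lemma prodDesc_succ_right (u : ℕ → G) (m : ℕ) :
    prodDesc u (m+1) = prodDesc (fun i => u (i+1)) m * u 1 := by
  simp only [prodDesc, List.range_succ_eq_map, List.map_map, List.reverse_cons,
    List.map_append, List.prod_append, List.map_cons, List.map_nil, List.prod_cons,
    List.prod_nil, mul_one, List.map_reverse]
  rfl

lemma commute_prodAsc (u : ℕ → G) (x : G) (m : ℕ)
    (h : ∀ i, 1 ≤ i → i ≤ m → x * u i = u i * x) :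
    x * prodAsc u m = prodAsc u m * x := by
  induction m with
  | zero => simp [prodAsc_zero]
  | succ m ih =>
    rw [prodAsc_succ, ← mul_assoc, ih (fun i h1 h2 => h i h1 (by omega)), mul_assoc,
      h (m+1) (by omega) le_rfl, ← mul_assoc]

lemma commute_prodDesc (u : ℕ → G) (x : G) (m : ℕ)
    (h : ∀ i, 1 ≤ i → i ≤ m → x * u i = u i * x) :
    x * prodDesc u m = prodDesc u m * x := by
  induction m with
  | zero => simp [prodDesc_zero]
  | succ m ih =>
    rw [prodDesc_succ, ← mul_assoc, h (m+1) (by omega) le_rfl, mul_assoc,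
      ih (fun i h1 h2 => h i h1 (by omega)), ← mul_assoc]

section Chains
variable (u : ℕ → G) (n : ℕ)

lemma chainA (hc : ∀ i j, 1 ≤ i → i + 2 ≤ j → j ≤ n → u i * u j = u j * u i)
    (hb : ∀ i, 1 ≤ i → i + 1 ≤ n → u i * u (i + 1) * u i = u (i + 1) * u i * u (i + 1)) :
    ∀ m, m ≤ n → ∀ i, 1 ≤ i → i + 1 ≤ m → prodAsc u m * u i = u (i+1) * prodAsc u m := by
  intro m
  induction m with
  | zero => intro _ i h1 h2; omega
  | succ m ih =>
    intro hm i h1 h2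
    rcases Nat.lt_or_ge (i+1) (m+1) with h | h
    · -- i + 1 ≤ m
      rw [prodAsc_succ, mul_assoc, ← hc i (m+1) h1 (by omega) (by omega), ← mul_assoc,
        ih (by omega) i h1 (by omega), mul_assoc]
    · -- i = m
      have hi : i = m := by omega
      subst hi
      obtain ⟨m', rfl⟩ : ∃ m', i = m' + 1 := ⟨i - 1, by omega⟩
      have hcm : u (m'+2) * prodAsc u m' = prodAsc u m' * u (m'+2) :=
        commute_prodAsc u (u (m'+2)) m'
          (fun i hi1 hi2 => (hc i (m'+2) hi1 (by omega) (by omega)).symm)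
      rw [prodAsc_succ, prodAsc_succ]
      calc prodAsc u m' * u (m'+1) * u (m'+2) * u (m'+1)
          = prodAsc u m' * (u (m'+1) * u (m'+2) * u (m'+1)) := by
            simp [mul_assoc]
        _ = prodAsc u m' * (u (m'+2) * u (m'+1) * u (m'+2)) := by
            rw [hb (m'+1) (by omega) (by omega)]
        _ = (prodAsc u m' * u (m'+2)) * (u (m'+1) * u (m'+2)) := by simp [mul_assoc]
        _ = (u (m'+2) * prodAsc u m') * (u (m'+1) * u (m'+2)) := by rw [← hcm]
        _ = u (m'+2) * (prodAsc u m' * u (m'+1) * u (m'+2)) := by simp [mul_assoc]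

lemma chainD (hc : ∀ i j, 1 ≤ i → i + 2 ≤ j → j ≤ n → u i * u j = u j * u i)
    (hb : ∀ i, 1 ≤ i → i + 1 ≤ n → u i * u (i + 1) * u i = u (i + 1) * u i * u (i + 1)) :
    ∀ m, m ≤ n → ∀ i, 1 ≤ i → i + 1 ≤ m → prodDesc u m * u (i+1) = u i * prodDesc u m := by
  intro m
  induction m with
  | zero => intro _ i h1 h2; omega
  | succ m ih =>
    intro hm i h1 h2
    rcases Nat.lt_or_ge (i+1) (m+1) with h | h
    · rw [prodDesc_succ, mul_assoc, ih (by omega) i h1 (by omega), ← mul_assoc,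
        ← hc i (m+1) h1 (by omega) (by omega), mul_assoc]
    · have hi : i = m := by omega
      subst hi
      obtain ⟨m', rfl⟩ : ∃ m', i = m' + 1 := ⟨i - 1, by omega⟩
      have hcm : u (m'+2) * prodDesc u m' = prodDesc u m' * u (m'+2) :=
        commute_prodDesc u (u (m'+2)) m'
          (fun i hi1 hi2 => (hc i (m'+2) hi1 (by omega) (by omega)).symm)
      rw [prodDesc_succ, prodDesc_succ]
      calc u (m'+2) * (u (m'+1) * prodDesc u m') * u (m'+2)
          = u (m'+2) * u (m'+1) * (prodDesc u m' * u (m'+2)) := by simp [mul_assoc]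
        _ = u (m'+2) * u (m'+1) * (u (m'+2) * prodDesc u m') := by rw [← hcm]
        _ = (u (m'+2) * u (m'+1) * u (m'+2)) * prodDesc u m' := by simp [mul_assoc]
        _ = (u (m'+1) * u (m'+2) * u (m'+1)) * prodDesc u m' := by
            rw [hb (m'+1) (by omega) (by omega)]
        _ = u (m'+1) * (u (m'+2) * (u (m'+1) * prodDesc u m')) := by simp [mul_assoc]

end Chains

lemma swapAD : ∀ (m : ℕ) (u : ℕ → G) (n : ℕ),
    (∀ i j, 1 ≤ i → i + 2 ≤ j → j ≤ n → u i * u j = u j * u i) →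
    (∀ i, 1 ≤ i → i + 1 ≤ n → u i * u (i + 1) * u i = u (i + 1) * u i * u (i + 1)) →
    m + 1 ≤ n →
    prodAsc u (m+1) * prodDesc u m = prodDesc u (m+1) * prodAsc (fun i => u (i+1)) m := by
  intro m
  induction m with
  | zero =>
    intro u n hc hb hm
    simp [prodAsc_succ, prodDesc_succ, prodAsc_zero, prodDesc_zero]
  | succ m ih =>
    intro u n hc hb hm
    set u' : ℕ → G := fun i => u (i+1) with hu'
    set u'' : ℕ → G := fun i => u (i+2) with hu''
    have hc' : ∀ i j, 1 ≤ i → i + 2 ≤ j → j ≤ n - 1 → u' i * u' j = u' j * u' i :=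
      fun i j h1 h2 h3 => hc (i+1) (j+1) (by omega) (by omega) (by omega)
    have hb' : ∀ i, 1 ≤ i → i + 1 ≤ n - 1 → u' i * u' (i+1) * u' i = u' (i+1) * u' i * u' (i+1) :=
      fun i h1 h2 => hb (i+1) (by omega) (by omega)
    have hih := ih u' (n-1) hc' hb' (by omega)
    have hasc : prodAsc (fun i => u' (i+1)) m = prodAsc u'' m := rfl
    have hcomm1 : u 1 * prodDesc u'' m = prodDesc u'' m * u 1 :=
      commute_prodDesc u'' (u 1) m (fun i h1 h2 => hc 1 (i+2) (by omega) (by omega) (by omega))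
    have hcomm2 : u 1 * prodAsc u'' m = prodAsc u'' m * u 1 :=
      commute_prodAsc u'' (u 1) m (fun i h1 h2 => hc 1 (i+2) (by omega) (by omega) (by omega))
    calc prodAsc u (m+2) * prodDesc u (m+1)
        = u 1 * (prodAsc u' (m+1) * prodDesc u' m) * u 1 := by
          rw [prodAsc_succ_left, prodDesc_succ_right]; simp [mul_assoc, hu']
      _ = u 1 * (prodDesc u' (m+1) * prodAsc u'' m) * u 1 := by rw [hih, hasc]
      _ = u 1 * (prodDesc u'' m * u' 1 * prodAsc u'' m) * u 1 := by
          rw [prodDesc_succ_right u' m]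
      _ = (u 1 * prodDesc u'' m) * (u 2 * (prodAsc u'' m * u 1)) := by
          show _ = _ * (u 2 * _); simp [mul_assoc]; rfl
      _ = (prodDesc u'' m * u 1) * (u 2 * (u 1 * prodAsc u'' m)) := by
          rw [hcomm1, hcomm2]
      _ = prodDesc u'' m * (u 1 * u 2 * u 1) * prodAsc u'' m := by simp [mul_assoc]
      _ = prodDesc u'' m * (u 2 * u 1 * u 2) * prodAsc u'' m := by
          rw [hb 1 (by omega) (by omega)]
      _ = (prodDesc u'' m * u 2 * u 1) * (u 2 * prodAsc u'' m) := by simp [mul_assoc]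
      _ = prodDesc u (m+2) * prodAsc u' (m+1) := by
          rw [prodDesc_succ_right u (m+1), prodDesc_succ_right u' m, prodAsc_succ_left u' m]

lemma deltaL1 : ∀ (m : ℕ) (u : ℕ → G) (n : ℕ),
    (∀ i j, 1 ≤ i → i + 2 ≤ j → j ≤ n → u i * u j = u j * u i) →
    (∀ i, 1 ≤ i → i + 1 ≤ n → u i * u (i + 1) * u i = u (i + 1) * u i * u (i + 1)) →
    m ≤ n →
    braidDelta u (m+1) = prodDesc u m * braidDelta (fun i => u (i+1)) m := by
  intro m
  induction m with
  | zero => intro u n hc hb hm; simp [braidDelta, prodAsc_zero, prodDesc_zero]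
  | succ m ih =>
    intro u n hc hb hm
    show prodAsc u (m+1) * braidDelta u (m+1) = _
    rw [ih u n hc hb (by omega), ← mul_assoc, swapAD m u n hc hb hm]
    show prodDesc u (m+1) * prodAsc (fun i => u (i+1)) m * braidDelta (fun i => u (i+1)) m = _
    rw [mul_assoc]
    rfl

lemma braidDelta_flip : ∀ (m : ℕ) (u : ℕ → G) (n : ℕ),
    (∀ i j, 1 ≤ i → i + 2 ≤ j → j ≤ n → u i * u j = u j * u i) →
    (∀ i, 1 ≤ i → i + 1 ≤ n → u i * u (i + 1) * u i = u (i + 1) * u i * u (i + 1)) →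
    m ≤ n + 1 → ∀ i, 1 ≤ i → i + 1 ≤ m →
    braidDelta u m * u i = u (m - i) * braidDelta u m := by
  intro m
  induction m using Nat.strong_induction_on with
  | _ m IH =>
  match m with
  | 0 => intro u n hc hb hm i h1 h2; omega
  | 1 => intro u n hc hb hm i h1 h2; omega
  | m + 2 =>
    intro u n hc hb hm i h1 h2
    rcases Nat.lt_or_ge i 2 with hi | hi
    · -- i = 1
      have hi1 : i = 1 := by omega
      subst hi1
      match m with
      | 0 =>
        show braidDelta u 2 * u 1 = u 1 * braidDelta u 2
        simp [braidDelta, prodAsc_succ, prodAsc_zero]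
      | m + 1 =>
        show prodAsc u (m+2) * braidDelta u (m+2) * u 1 = u (m+3-1) * _
        rw [mul_assoc, IH (m+2) (by omega) u n hc hb (by omega) 1 (by omega) (by omega)]
        have : m + 2 - 1 = m + 1 := by omega
        rw [this, ← mul_assoc, chainA u n hc hb (m+2) (by omega) (m+1) (by omega) (by omega),
          mul_assoc]
        rfl
    · -- 2 ≤ i ≤ m+1
      set u' : ℕ → G := fun j => u (j+1) with hu'
      have hc' : ∀ a b, 1 ≤ a → a + 2 ≤ b → b ≤ n - 1 → u' a * u' b = u' b * u' a :=
        fun a b ha hab hb3 => hc (a+1) (b+1) (by omega) (by omega) (by omega)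
      have hb' : ∀ a, 1 ≤ a → a + 1 ≤ n - 1 → u' a * u' (a+1) * u' a = u' (a+1) * u' a * u' (a+1) :=
        fun a ha hab => hb (a+1) (by omega) (by omega)
      rw [deltaL1 (m+1) u n hc hb (by omega), ← hu']
      have harg : u i = u' (i - 1) := by show _ = u _; congr 1; omega
      rw [mul_assoc, harg,
        IH (m+1) (by omega) u' (n-1) hc' hb' (by omega) (i-1) (by omega) (by omega)]
      have harg2 : u' (m + 1 - (i-1)) = u ((m + 2 - i) + 1) := by
        show u _ = u _; congr 1; omega
      rw [harg2, ← mul_assoc,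
        chainD u n hc hb (m+1) (by omega) (m+2-i) (by omega) (by omega), mul_assoc]

lemma deltaFD (u : ℕ → G) (n : ℕ)
    (hc : ∀ i j, 1 ≤ i → i + 2 ≤ j → j ≤ n → u i * u j = u j * u i)
    (hb : ∀ i, 1 ≤ i → i + 1 ≤ n → u i * u (i + 1) * u i = u (i + 1) * u i * u (i + 1))
    (m : ℕ) (hm : m ≤ n + 1) :
    ∀ k, k + 1 ≤ m → braidDelta u m * prodDesc u k =
      ((List.range k).map (fun j => u (m - k + j))).prod * braidDelta u m := by
  intro k
  induction k with
  | zero => intro _; simp [prodDesc_zero]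
  | succ k ih =>
    intro hk
    have hlist : ((List.range (k+1)).map (fun j => u (m - (k+1) + j))).prod
        = u (m - (k+1)) * ((List.range k).map (fun j => u (m - k + j))).prod := by
      rw [List.range_succ_eq_map, List.map_cons, List.prod_cons, List.map_map]
      congr 1
      exact congrArg List.prod (List.map_congr_left (fun j hj =>
        congrArg u (show m - (k+1) + (j+1) = m - k + j by omega)))
    rw [prodDesc_succ, ← mul_assoc,
      braidDelta_flip m u n hc hb hm (k+1) (by omega) hk, mul_assoc, ih (by omega),
      ← mul_assoc, hlist]

lemma main_aux : ∀ (k : ℕ) (u : ℕ → G),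
    (∀ i j, 1 ≤ i → i + 2 ≤ j → j ≤ k → u i * u j = u j * u i) →
    (∀ i, 1 ≤ i → i + 1 ≤ k → u i * u (i + 1) * u i = u (i + 1) * u i * u (i + 1)) →
    (braidDelta u (k+1)) ^ 2 =
      ((List.range k).map (fun i0 =>
        (((List.range i0).map (fun j => u (k - i0 + j))).prod) * (u k) ^ 2 *
        ((((List.range i0).reverse).map (fun j => u (k - i0 + j))).prod))).prod := by
  intro k
  induction k with
  | zero =>
    intro u hc hb
    show (prodAsc u 0 * braidDelta u 0) ^ 2 = _
    simp [braidDelta, prodAsc_zero]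
  | succ k ih =>
    intro u hc hb
    have hc' : ∀ i j, 1 ≤ i → i + 2 ≤ j → j ≤ k →
        u (i+1) * u (j+1) = u (j+1) * u (i+1) :=
      fun i j h1 h2 h3 => hc (i+1) (j+1) (by omega) (by omega) (by omega)
    have hb' : ∀ i, 1 ≤ i → i + 1 ≤ k →
        u (i+1) * u (i+1+1) * u (i+1) = u (i+1+1) * u (i+1) * u (i+1+1) :=
      fun i h1 h2 => hb (i+1) (by omega) (by omega)
    have hIH := ih (fun i => u (i+1)) hc' hb'
    have hL1 : braidDelta u (k+2) =
        prodDesc u (k+1) * braidDelta (fun i => u (i+1)) (k+1) :=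
      deltaL1 (k+1) u (k+1) hc hb le_rfl
    have hFD : braidDelta u (k+2) * prodDesc u (k+1) =
        prodAsc u (k+1) * braidDelta u (k+2) := by
      have h0 := deltaFD u (k+1) hc hb (k+2) (by omega) (k+1) (by omega)
      have h1 : ((List.range (k+1)).map (fun j => u (k+2 - (k+1) + j))).prod
          = prodAsc u (k+1) := by
        exact congrArg List.prod (List.map_congr_left (fun j hj =>
          congrArg u (show k + 2 - (k+1) + j = j + 1 by omega)))
      rw [h0, h1]
    have e1 : braidDelta u (k+2) * braidDelta u (k+2) =
        (prodAsc u (k+1) * prodDesc u (k+1)) *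
          (braidDelta (fun i => u (i+1)) (k+1) * braidDelta (fun i => u (i+1)) (k+1)) := by
      calc braidDelta u (k+2) * braidDelta u (k+2)
          = braidDelta u (k+2) *
            (prodDesc u (k+1) * braidDelta (fun i => u (i+1)) (k+1)) := by rw [← hL1]
        _ = (braidDelta u (k+2) * prodDesc u (k+1)) *
            braidDelta (fun i => u (i+1)) (k+1) := by rw [mul_assoc]
        _ = (prodAsc u (k+1) * braidDelta u (k+2)) *
            braidDelta (fun i => u (i+1)) (k+1) := by rw [hFD]
        _ = (prodAsc u (k+1) *
            (prodDesc u (k+1) * braidDelta (fun i => u (i+1)) (k+1))) *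
            braidDelta (fun i => u (i+1)) (k+1) := by rw [hL1]
        _ = _ := by simp [mul_assoc]
    have hcent : ∀ i, 1 ≤ i → i ≤ k + 1 →
        (braidDelta u (k+2) * braidDelta u (k+2)) * u i =
          u i * (braidDelta u (k+2) * braidDelta u (k+2)) := by
      intro i h1 h2
      have f1 := braidDelta_flip (k+2) u (k+1) hc hb (by omega) i h1 (by omega)
      have f2 := braidDelta_flip (k+2) u (k+1) hc hb (by omega) (k+2-i) (by omega) (by omega)
      have e : u (k + 2 - (k + 2 - i)) = u i := congrArg u (by omega)
      rw [mul_assoc, f1, ← mul_assoc, f2, e, mul_assoc]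
    have hcA : (braidDelta u (k+2) * braidDelta u (k+2)) * prodAsc u (k+1) =
        prodAsc u (k+1) * (braidDelta u (k+2) * braidDelta u (k+2)) :=
      commute_prodAsc u _ (k+1) (fun i h1 h2 => hcent i h1 h2)
    have hcD : (braidDelta u (k+2) * braidDelta u (k+2)) * prodDesc u (k+1) =
        prodDesc u (k+1) * (braidDelta u (k+2) * braidDelta u (k+2)) :=
      commute_prodDesc u _ (k+1) (fun i h1 h2 => hcent i h1 h2)
    have hcAD : (braidDelta u (k+2) * braidDelta u (k+2)) *
        (prodAsc u (k+1) * prodDesc u (k+1)) =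
        (prodAsc u (k+1) * prodDesc u (k+1)) *
          (braidDelta u (k+2) * braidDelta u (k+2)) := by
      rw [← mul_assoc, hcA, mul_assoc, hcD, ← mul_assoc]
    -- the key group identity
    have e2 : braidDelta u (k+2) * braidDelta u (k+2) =
        (braidDelta (fun i => u (i+1)) (k+1) * braidDelta (fun i => u (i+1)) (k+1)) *
          (prodAsc u (k+1) * prodDesc u (k+1)) := by
      have h3 : braidDelta (fun i => u (i+1)) (k+1) * braidDelta (fun i => u (i+1)) (k+1) =
          (prodAsc u (k+1) * prodDesc u (k+1))⁻¹ *
            (braidDelta u (k+2) * braidDelta u (k+2)) := by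
        rw [e1, ← mul_assoc, inv_mul_cancel, one_mul]
      rw [h3, mul_assoc, hcAD, ← mul_assoc, inv_mul_cancel, one_mul]
    -- list part
    have hFk : (((List.range k).map (fun j => u (k + 1 - k + j))).prod) * (u (k+1)) ^ 2 *
        ((((List.range k).reverse).map (fun j => u (k + 1 - k + j))).prod)
        = prodAsc u (k+1) * prodDesc u (k+1) := by
      have ef : ((List.range k).map (fun j => u (k + 1 - k + j))) =
          ((List.range k).map (fun j => u (j + 1))) :=
        List.map_congr_left (fun j hj => congrArg u (by omega))
      have ef2 : (((List.range k).reverse).map (fun j => u (k + 1 - k + j))) =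
          (((List.range k).reverse).map (fun j => u (j + 1))) :=
        List.map_congr_left (fun j hj => congrArg u (by omega))
      rw [ef, ef2]
      show prodAsc u k * (u (k+1))^2 * prodDesc u k = _
      rw [prodAsc_succ, prodDesc_succ, pow_two]
      simp [mul_assoc]
    have hlist : ((List.range (k+1)).map (fun i0 =>
        (((List.range i0).map (fun j => u (k + 1 - i0 + j))).prod) * (u (k+1)) ^ 2 *
        ((((List.range i0).reverse).map (fun j => u (k + 1 - i0 + j))).prod))).prod
        = (braidDelta (fun i => u (i+1)) (k+1)) ^ 2 *
          (prodAsc u (k+1) * prodDesc u (k+1)) := by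
      rw [List.range_succ, List.map_append, List.prod_append, hIH]
      congr 1
      · refine congrArg List.prod (List.map_congr_left (fun i0 hi0 => ?_))
        have hi0' : i0 < k := List.mem_range.mp hi0
        have ea : ((List.range i0).map (fun j => u (k + 1 - i0 + j))) =
            ((List.range i0).map (fun j => u (k - i0 + j + 1))) :=
          List.map_congr_left (fun j hj => congrArg u (by omega))
        have eb : (((List.range i0).reverse).map (fun j => u (k + 1 - i0 + j))) =
            (((List.range i0).reverse).map (fun j => u (k - i0 + j + 1))) :=
          List.map_congr_left (fun j hj => congrArg u (by omega))
        rw [ea, eb]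
      · simpa using hFk
    rw [hlist, pow_two, pow_two, e2]

/-- Δ_g² = ∏_{i=1}^{g-1} (u_{g-i} ⋯ u_{g-2}) u_{g-1}² (u_{g-2} ⋯ u_{g-i}). -/
theorem braidDelta_sq_eq_prod_conj (g : ℕ) (hg : 1 ≤ g) (u : ℕ → G)
    (hu1 : ∀ i j, 1 ≤ i → i + 2 ≤ j → j ≤ g - 1 → u i * u j = u j * u i)
    (hu2 : ∀ i, 1 ≤ i → i + 1 ≤ g - 1 → u i * u (i + 1) * u i = u (i + 1) * u i * u (i + 1)) :
    (braidDelta u g) ^ 2 =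
      ((List.range (g - 1)).map (fun i0 =>
        (((List.range i0).map (fun j => u (g - (i0 + 1) + j))).prod) *
          (u (g - 1)) ^ 2 *
        ((((List.range i0).reverse).map (fun j => u (g - (i0 + 1) + j))).prod))).prod := by
  obtain ⟨k, rfl⟩ : ∃ k, g = k + 1 := ⟨g - 1, by omega⟩
  have h := main_aux k u (by simpa using hu1) (by simpa using hu2)
  simpa [Nat.succ_sub_succ, Nat.add_sub_cancel] using h
end

section
/- Let G be a group containing elements a_1, ..., a_{g-1} and u_1, ..., u_{g-1} such that: both families satisfy the braid relations among themselves, a_i u_j = u_j a_i whenever |i - j| > 1, a_i u_{i+1} u_i = u_{i+1} u_i a_{i+1} and a_{i+1} u_i u_{i+1} = u_i u_{i+1} a_i for all i, a_1 u_1 a_1 = u_1, and u_2 a_1 a_2 u_1 = a_1 a_2. Then a_i u_i a_i = u_i for every i = 1, ..., g-1. -/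
variable {G : Type*} [Group G]

/-- relation (C4a): a_i u_i a_i = u_i for all i = 1, …, g-1. -/
theorem rel_C4a (g : ℕ) (a u : ℕ → G)
    (ha1 : ∀ i j, 1 ≤ i → i + 2 ≤ j → j ≤ g - 1 → a i * a j = a j * a i)
    (ha2 : ∀ i, 1 ≤ i → i + 1 ≤ g - 1 → a i * a (i + 1) * a i = a (i + 1) * a i * a (i + 1))
    (hu1 : ∀ i j, 1 ≤ i → i + 2 ≤ j → j ≤ g - 1 → u i * u j = u j * u i)
    (hu2 : ∀ i, 1 ≤ i → i + 1 ≤ g - 1 → u i * u (i + 1) * u i = u (i + 1) * u i * u (i + 1))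
    (hC1 : ∀ i j, 1 ≤ i → i ≤ g - 1 → 1 ≤ j → j ≤ g - 1 → (i + 2 ≤ j ∨ j + 2 ≤ i) →
      a i * u j = u j * a i)
    (hC2 : ∀ i, 1 ≤ i → i ≤ g - 2 → a i * u (i + 1) * u i = u (i + 1) * u i * a (i + 1))
    (hC3 : ∀ i, 1 ≤ i → i ≤ g - 2 → a (i + 1) * u i * u (i + 1) = u i * u (i + 1) * a i)
    (hC4 : a 1 * u 1 * a 1 = u 1)
    (hC5 : u 2 * a 1 * a 2 * u 1 = a 1 * a 2)
    :
    ∀ i, 1 ≤ i → i ≤ g - 1 → a i * u i * a i = u i := by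
  intro i
  induction i with
  | zero => omega
  | succ n ih =>
    intro _ h2
    rcases Nat.eq_zero_or_pos n with h0 | hpos
    · subst h0; exact hC4
    · have key := ih hpos (by omega)
      set w := u (n + 1) * u n with hw
      have hwa : a n * w = w * a (n + 1) := by
        have := hC2 n hpos (by omega)
        rw [hw, ← mul_assoc, this]
      have hwu : u n * w = w * u (n + 1) := by
        have := hu2 n hpos (by omega)
        rw [hw, ← mul_assoc, this]
      have ha' : a (n + 1) = w⁻¹ * a n * w := by
        rw [mul_assoc, hwa, ← mul_assoc, inv_mul_cancel, one_mul]
      have hu' : u (n + 1) = w⁻¹ * u n * w := by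
        rw [mul_assoc, hwu, ← mul_assoc, inv_mul_cancel, one_mul]
      rw [ha', hu']
      have : w⁻¹ * a n * w * (w⁻¹ * u n * w) * (w⁻¹ * a n * w)
          = w⁻¹ * (a n * u n * a n) * w := by group
      rw [this, key]
end

section
/- Let G be a group containing elements a_1, ..., a_{g-1} and u_1, ..., u_{g-1} satisfying: the braid relations within each family, a_i u_j = u_j a_i for |i-j| > 1, a_i u_{i+1} u_i = u_{i+1} u_i a_{i+1}, a_{i+1} u_i u_{i+1} = u_i u_{i+1} a_i, a_1 u_1 a_1 = u_1, and u_2 a_1 a_2 u_1 = a_1 a_2. Then u_{i+1} a_i a_{i+1} u_i = a_i a_{i+1} for every i = 1, ..., g-2. -/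
variable {G : Type*} [Group G]

/-- relation (C5a): u_{i+1} a_i a_{i+1} u_i = a_i a_{i+1} for i = 1, …, g-2. -/
theorem rel_C5a (g : ℕ) (a u : ℕ → G)
    (ha1 : ∀ i j, 1 ≤ i → i + 2 ≤ j → j ≤ g - 1 → a i * a j = a j * a i)
    (ha2 : ∀ i, 1 ≤ i → i + 1 ≤ g - 1 → a i * a (i + 1) * a i = a (i + 1) * a i * a (i + 1))
    (hu1 : ∀ i j, 1 ≤ i → i + 2 ≤ j → j ≤ g - 1 → u i * u j = u j * u i)
    (hu2 : ∀ i, 1 ≤ i → i + 1 ≤ g - 1 → u i * u (i + 1) * u i = u (i + 1) * u i * u (i + 1))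
    (hC1 : ∀ i j, 1 ≤ i → i ≤ g - 1 → 1 ≤ j → j ≤ g - 1 → (i + 2 ≤ j ∨ j + 2 ≤ i) →
      a i * u j = u j * a i)
    (hC2 : ∀ i, 1 ≤ i → i ≤ g - 2 → a i * u (i + 1) * u i = u (i + 1) * u i * a (i + 1))
    (hC3 : ∀ i, 1 ≤ i → i ≤ g - 2 → a (i + 1) * u i * u (i + 1) = u i * u (i + 1) * a i)
    (hC4 : a 1 * u 1 * a 1 = u 1)
    (hC5 : u 2 * a 1 * a 2 * u 1 = a 1 * a 2)
    :
    ∀ i, 1 ≤ i → i ≤ g - 2 → u (i + 1) * a i * a (i + 1) * u i = a i * a (i + 1) := by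
  intro i hi
  induction i, hi using Nat.le_induction with
  | base => intro _; exact hC5
  | succ i hi IH =>
    intro h
    have hle : i ≤ g - 2 := le_trans (Nat.le_succ i) h
    have key := IH hle
    have hg1 : i + 2 ≤ g - 1 := by omega
    have hg2 : i + 1 ≤ g - 1 := by omega
    have c1 := hC1 i (i + 2) hi (by omega) (by omega) hg1 (Or.inl (by omega))
    have c1' := hC1 (i + 2) i (by omega) hg1 hi (by omega) (Or.inr (by omega))
    have c2 := hC2 i hi hle
    have c2' := hC2 (i + 1) (by omega) h
    have b1 := hu2 i hi hg2
    have b2 := hu2 (i + 1) (by omega) hg1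
    have b3 := hu1 i (i + 2) hi (by omega) hg1
    -- the conjugator
    set w : G := u (i + 2) * u (i + 1) * u i with hw
    have h1 : a i * w = w * a (i + 1) := by
      calc a i * (u (i + 2) * u (i + 1) * u i)
          = (a i * u (i + 2)) * (u (i + 1) * u i) := by group
        _ = (u (i + 2) * a i) * (u (i + 1) * u i) := by rw [c1]
        _ = u (i + 2) * (a i * u (i + 1) * u i) := by group
        _ = u (i + 2) * (u (i + 1) * u i * a (i + 1)) := by rw [c2]
        _ = (u (i + 2) * u (i + 1) * u i) * a (i + 1) := by group
    have h2 : a (i + 1) * w = w * a (i + 2) := by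
      calc a (i + 1) * (u (i + 2) * u (i + 1) * u i)
          = (a (i + 1) * u (i + 2) * u (i + 1)) * u i := by group
        _ = (u (i + 2) * u (i + 1) * a (i + 2)) * u i := by rw [c2']
        _ = (u (i + 2) * u (i + 1)) * (a (i + 2) * u i) := by group
        _ = (u (i + 2) * u (i + 1)) * (u i * a (i + 2)) := by rw [c1']
        _ = (u (i + 2) * u (i + 1) * u i) * a (i + 2) := by group
    have h3 : u i * w = w * u (i + 1) := by
      calc u i * (u (i + 2) * u (i + 1) * u i)
          = (u i * u (i + 2)) * (u (i + 1) * u i) := by group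
        _ = (u (i + 2) * u i) * (u (i + 1) * u i) := by rw [b3]
        _ = u (i + 2) * (u i * u (i + 1) * u i) := by group
        _ = u (i + 2) * (u (i + 1) * u i * u (i + 1)) := by rw [b1]
        _ = (u (i + 2) * u (i + 1) * u i) * u (i + 1) := by group
    have h4 : u (i + 1) * w = w * u (i + 2) := by
      calc u (i + 1) * (u (i + 2) * u (i + 1) * u i)
          = (u (i + 1) * u (i + 2) * u (i + 1)) * u i := by group
        _ = (u (i + 2) * u (i + 1) * u (i + 2)) * u i := by rw [b2]
        _ = (u (i + 2) * u (i + 1)) * (u (i + 2) * u i) := by group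
        _ = (u (i + 2) * u (i + 1)) * (u i * u (i + 2)) := by rw [← b3]
        _ = (u (i + 2) * u (i + 1) * u i) * u (i + 2) := by group
    have e : u (i + 1) * a i * a (i + 1) * u i * w
        = w * (u (i + 2) * a (i + 1) * a (i + 2) * u (i + 1)) := by
      calc u (i + 1) * a i * a (i + 1) * u i * w
          = u (i + 1) * a i * a (i + 1) * (u i * w) := by group
        _ = u (i + 1) * a i * a (i + 1) * (w * u (i + 1)) := by rw [h3]
        _ = u (i + 1) * a i * (a (i + 1) * w) * u (i + 1) := by group
        _ = u (i + 1) * a i * (w * a (i + 2)) * u (i + 1) := by rw [h2]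
        _ = u (i + 1) * (a i * w) * (a (i + 2) * u (i + 1)) := by group
        _ = u (i + 1) * (w * a (i + 1)) * (a (i + 2) * u (i + 1)) := by rw [h1]
        _ = (u (i + 1) * w) * (a (i + 1) * (a (i + 2) * u (i + 1))) := by group
        _ = (w * u (i + 2)) * (a (i + 1) * (a (i + 2) * u (i + 1))) := by rw [h4]
        _ = w * (u (i + 2) * a (i + 1) * a (i + 2) * u (i + 1)) := by group
    have e2 : w * (u (i + 2) * a (i + 1) * a (i + 2) * u (i + 1))
        = w * (a (i + 1) * a (i + 2)) := by
      rw [← e, key]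
      calc a i * a (i + 1) * w = a i * (a (i + 1) * w) := by group
        _ = a i * (w * a (i + 2)) := by rw [h2]
        _ = (a i * w) * a (i + 2) := by group
        _ = (w * a (i + 1)) * a (i + 2) := by rw [h1]
        _ = w * (a (i + 1) * a (i + 2)) := by group
    have := mul_left_cancel e2
    calc u (i + 1 + 1) * a (i + 1) * a (i + 1 + 1) * u (i + 1)
        = u (i + 2) * a (i + 1) * a (i + 2) * u (i + 1) := rfl
      _ = a (i + 1) * a (i + 2) := this
end

section
/- Let G be a group with elements a_1, ..., a_{g-1}, u_1, ..., u_{g-1} satisfying the braid relations within each family, a_i u_j = u_j a_i for |i-j|>1, a_i u_{i+1} u_i = u_{i+1} u_i a_{i+1}, a_{i+1} u_i u_{i+1} = u_i u_{i+1} a_i, a_1 u_1 a_1 = u_1, u_2 a_1 a_2 u_1 = a_1 a_2, (u_{g-1} ⋯ u_1)(u_1 ⋯ u_{g-1}) = 1, (u_1 ⋯ u_{g-1})^g = 1, and a_1 (a_2 ⋯ a_{g-1} u_{g-1} ⋯ u_2) a_1 = a_2 ⋯ a_{g-1} u_{g-1} ⋯ u_2. Then (a_1 ⋯ a_{g-1})²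 = (u_{g-1} ⋯ u_1)^{-2} = (u_1 ⋯ u_{g-1})². -/
variable {G : Type*} [Group G]

namespace RelE5Aux

/-- ascending product `f (s+1) * f (s+2) * ⋯ * f (s+m)` -/
def ascFrom (f : ℕ → G) (s m : ℕ) : G :=
  ((List.range m).map (fun t => f (t + s + 1))).prod

@[simp] lemma prodAsc_zero (f : ℕ → G) : prodAsc f 0 = 1 := by simp [prodAsc]

lemma prodAsc_succ (f : ℕ → G) (m : ℕ) :
    prodAsc f (m + 1) = prodAsc f m * f (m + 1) := by
  simp [prodAsc, List.range_succ]

@[simp] lemma prodAsc_one (f : ℕ → G) : prodAsc f 1 = f 1 := by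
  simp [prodAsc, List.range_succ]

@[simp] lemma prodDesc_zero (f : ℕ → G) : prodDesc f 0 = 1 := by simp [prodDesc]

lemma prodDesc_succ (f : ℕ → G) (m : ℕ) :
    prodDesc f (m + 1) = f (m + 1) * prodDesc f m := by
  simp [prodDesc, List.range_succ]

@[simp] lemma prodDesc_one (f : ℕ → G) : prodDesc f 1 = f 1 := by
  simp [prodDesc, List.range_succ]

@[simp] lemma ascFrom_zero (f : ℕ → G) (s : ℕ) : ascFrom f s 0 = 1 := by simp [ascFrom]

lemma ascFrom_succ (f : ℕ → G) (s m : ℕ) :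
    ascFrom f s (m + 1) = ascFrom f s m * f (m + s + 1) := by
  simp [ascFrom, List.range_succ]

lemma prodAsc_head (f : ℕ → G) (m : ℕ) :
    prodAsc f (m + 1) = f 1 * ascFrom f 1 m := by
  rw [prodAsc, List.range_succ_eq_map]
  simp only [List.map_cons, List.prod_cons, List.map_map]
  rfl

lemma prodDesc_snoc (f : ℕ → G) (m : ℕ) :
    prodDesc f (m + 1) =
      (((List.range m).reverse).map (fun i => f (i + 2))).prod * f 1 := by
  rw [prodDesc, List.range_succ_eq_map, List.reverse_cons]
  rw [List.map_append, List.prod_append]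
  simp only [List.map_cons, List.map_nil, List.prod_cons, List.prod_nil, mul_one]
  rw [← List.map_reverse, List.map_map]
  rfl

lemma prodAsc_comm {f : ℕ → G} {x : G} {m : ℕ}
    (hx : ∀ i, 1 ≤ i → i ≤ m → f i * x = x * f i) :
    prodAsc f m * x = x * prodAsc f m := by
  induction m with
  | zero => simp
  | succ k ih =>
      rw [prodAsc_succ, mul_assoc, hx (k+1) (by omega) le_rfl, ← mul_assoc,
        ih (fun i h1 h2 => hx i h1 (by omega)), mul_assoc]

lemma prodDesc_comm {f : ℕ → G} {x : G} {m : ℕ}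
    (hx : ∀ i, 1 ≤ i → i ≤ m → f i * x = x * f i) :
    prodDesc f m * x = x * prodDesc f m := by
  induction m with
  | zero => simp
  | succ k ih =>
      rw [prodDesc_succ, mul_assoc, ih (fun i h1 h2 => hx i h1 (by omega)), ← mul_assoc,
        hx (k+1) (by omega) le_rfl, mul_assoc]

lemma ascFrom_comm {f : ℕ → G} {x : G} {s m : ℕ}
    (hx : ∀ t, t < m → f (t + s + 1) * x = x * f (t + s + 1)) :
    ascFrom f s m * x = x * ascFrom f s m := by
  induction m with
  | zero => simp
  | succ k ih =>
      rw [ascFrom_succ, mul_assoc, hx k (by omega), ← mul_assoc,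
        ih (fun t ht => hx t (by omega)), mul_assoc]

end RelE5Aux

namespace RelE5Aux

/-- All the "local" relations among the generators, with top index `n`. -/
structure Rels (n : ℕ) (a u : ℕ → G) : Prop where
  a_comm : ∀ i j, 1 ≤ i → i + 2 ≤ j → j ≤ n → a i * a j = a j * a i
  a_braid : ∀ i, 1 ≤ i → i + 1 ≤ n → a i * a (i+1) * a i = a (i+1) * a i * a (i+1)
  u_comm : ∀ i j, 1 ≤ i → i + 2 ≤ j → j ≤ n → u i * u j = u j * u i
  u_braid : ∀ i, 1 ≤ i → i + 1 ≤ n → u i * u (i+1) * u i = u (i+1) * u i * u (i+1)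
  au_comm : ∀ i j, 1 ≤ i → i ≤ n → 1 ≤ j → j ≤ n → (i + 2 ≤ j ∨ j + 2 ≤ i) →
    a i * u j = u j * a i
  c2 : ∀ i, 1 ≤ i → i + 1 ≤ n → a i * u (i+1) * u i = u (i+1) * u i * a (i+1)
  c3 : ∀ i, 1 ≤ i → i + 1 ≤ n → a (i+1) * u i * u (i+1) = u i * u (i+1) * a i
  c4 : a 1 * u 1 * a 1 = u 1
  c5 : u 2 * a 1 * a 2 * u 1 = a 1 * a 2

variable {n : ℕ} {a u : ℕ → G}

/-- (E1-type) `a i * u i * a i = u i` for all `i ≤ n`. -/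
lemma rel_c4 (h : Rels n a u) : ∀ i, 1 ≤ i → i ≤ n → a i * u i * a i = u i := by
  intro i hi
  induction i, hi using Nat.le_induction with
  | base => intro _; exact h.c4
  | succ i hi ih =>
      intro hin
      have hi1 : i + 1 ≤ n := hin
      have hin' : i ≤ n := by omega
      have e1 : a i * (u (i+1) * u i) = (u (i+1) * u i) * a (i+1) := by
        have := h.c2 i hi hi1
        calc a i * (u (i+1) * u i) = a i * u (i+1) * u i := by group
          _ = u (i+1) * u i * a (i+1) := this
          _ = (u (i+1) * u i) * a (i+1) := by group
      have e2 : u i * (u (i+1) * u i) = (u (i+1) * u i) * u (i+1) := by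
        have := h.u_braid i hi hi1
        calc u i * (u (i+1) * u i) = u i * u (i+1) * u i := by group
          _ = u (i+1) * u i * u (i+1) := this
          _ = (u (i+1) * u i) * u (i+1) := by group
      have key : (u (i+1) * u i) * (a (i+1) * u (i+1) * a (i+1)) =
          (u (i+1) * u i) * u (i+1) := by
        calc (u (i+1) * u i) * (a (i+1) * u (i+1) * a (i+1))
            = (a i * (u (i+1) * u i)) * u (i+1) * a (i+1) := by rw [e1]; group
          _ = a i * (u i * (u (i+1) * u i)) * a (i+1) := by rw [e2]; group
          _ = a i * u i * ((u (i+1) * u i) * a (i+1)) := by group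
          _ = a i * u i * (a i * (u (i+1) * u i)) := by rw [e1]
          _ = (a i * u i * a i) * (u (i+1) * u i) := by group
          _ = u i * (u (i+1) * u i) := by rw [ih hin']
          _ = (u (i+1) * u i) * u (i+1) := e2
      exact mul_left_cancel key

lemma rel_c4_right (h : Rels n a u) {i : ℕ} (h1 : 1 ≤ i) (h2 : i ≤ n) :
    a i * u i = u i * (a i)⁻¹ := by
  have := rel_c4 h i h1 h2
  calc a i * u i = (a i * u i * a i) * (a i)⁻¹ := by group
    _ = u i * (a i)⁻¹ := by rw [this]

lemma rel_c4_left (h : Rels n a u) {i : ℕ} (h1 : 1 ≤ i) (h2 : i ≤ n) :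
    u i * a i = (a i)⁻¹ * u i := by
  have := rel_c4 h i h1 h2
  calc u i * a i = (a i)⁻¹ * (a i * u i * a i) := by group
    _ = (a i)⁻¹ * u i := by rw [this]


/-- `U_m * u i = u (i+1) * U_m` for `i+1 ≤ m`. -/
lemma shift_u_asc (h : Rels n a u) :
    ∀ m i, 1 ≤ i → i + 1 ≤ m → m ≤ n → prodAsc u m * u i = u (i+1) * prodAsc u m := by
  intro m
  induction m with
  | zero => intro i h1 h2 h3; omega
  | succ m ih =>
      intro i h1 h2 h3
      rcases Nat.lt_or_ge i m with hlt | hge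
      · -- i + 1 < m + 1, use commutation of u i with u (m+1)
        rw [prodAsc_succ, mul_assoc, ← h.u_comm i (m+1) h1 (by omega) h3, ← mul_assoc,
          ih i h1 (by omega) (by omega), mul_assoc]
      · -- i = m : base case
        have him : i = m := by omega
        subst him
        obtain ⟨j, rfl⟩ : ∃ j, i = j + 1 := ⟨i - 1, by omega⟩
        rw [prodAsc_succ, prodAsc_succ]
        have hb : u (j+1) * u (j+2) * u (j+1) = u (j+2) * u (j+1) * u (j+2) :=
          h.u_braid (j+1) (by omega) (by omega)
        have hc : prodAsc u j * u (j+2) = u (j+2) * prodAsc u j :=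
          prodAsc_comm (fun t ht1 ht2 => h.u_comm t (j+2) ht1 (by omega) (by omega))
        calc prodAsc u j * u (j+1) * u (j+2) * u (j+1)
            = prodAsc u j * (u (j+1) * u (j+2) * u (j+1)) := by group
          _ = prodAsc u j * (u (j+2) * u (j+1) * u (j+2)) := by rw [hb]
          _ = (prodAsc u j * u (j+2)) * (u (j+1) * u (j+2)) := by group
          _ = (u (j+2) * prodAsc u j) * (u (j+1) * u (j+2)) := by rw [hc]
          _ = u (j+2) * (prodAsc u j * u (j+1) * u (j+2)) := by group

/-- `U_m * a i = a (i+1) * U_m` for `i+1 ≤ m`. -/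
lemma shift_a_asc (h : Rels n a u) :
    ∀ m i, 1 ≤ i → i + 1 ≤ m → m ≤ n → prodAsc u m * a i = a (i+1) * prodAsc u m := by
  intro m
  induction m with
  | zero => intro i h1 h2 h3; omega
  | succ m ih =>
      intro i h1 h2 h3
      rcases Nat.lt_or_ge i m with hlt | hge
      · rw [prodAsc_succ, mul_assoc,
          ← h.au_comm i (m+1) h1 (by omega) (by omega) h3 (Or.inl (by omega)), ← mul_assoc,
          ih i h1 (by omega) (by omega), mul_assoc]
      · have him : i = m := by omega
        subst him
        obtain ⟨j, rfl⟩ : ∃ j, i = j + 1 := ⟨i - 1, by omega⟩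
        rw [prodAsc_succ, prodAsc_succ]
        have hb : a (j+2) * u (j+1) * u (j+2) = u (j+1) * u (j+2) * a (j+1) :=
          h.c3 (j+1) (by omega) (by omega)
        have hc : prodAsc u j * a (j+2) = a (j+2) * prodAsc u j :=
          prodAsc_comm (fun t ht1 ht2 =>
            (h.au_comm (j+2) t (by omega) (by omega) ht1 (by omega) (Or.inr (by omega))).symm)
        calc prodAsc u j * u (j+1) * u (j+2) * a (j+1)
            = prodAsc u j * (u (j+1) * u (j+2) * a (j+1)) := by group
          _ = prodAsc u j * (a (j+2) * u (j+1) * u (j+2)) := by rw [hb]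
          _ = (prodAsc u j * a (j+2)) * (u (j+1) * u (j+2)) := by group
          _ = (a (j+2) * prodAsc u j) * (u (j+1) * u (j+2)) := by rw [hc]
          _ = a (j+2) * (prodAsc u j * u (j+1) * u (j+2)) := by group

/-- (E2-type) shifted C5: `u (i+1) * a i * a (i+1) * u i = a i * a (i+1)`. -/
lemma rel_c5 (h : Rels n a u) (hn : 2 ≤ n) :
    ∀ i, 1 ≤ i → i + 1 ≤ n → u (i+1) * a i * a (i+1) * u i = a i * a (i+1) := by
  intro i hi
  induction i, hi using Nat.le_induction with
  | base => intro _; exact h.c5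
  | succ i hi ih =>
      intro hi2
      have hi1 : i + 1 ≤ n := by omega
      set Uz := prodAsc u (i+2) with hUz
      have eU1 : Uz * u i = u (i+1) * Uz := shift_u_asc h (i+2) i hi (by omega) hi2
      have eU2 : Uz * u (i+1) = u (i+2) * Uz := shift_u_asc h (i+2) (i+1) (by omega) (by omega) hi2
      have eA1 : Uz * a i = a (i+1) * Uz := shift_a_asc h (i+2) i hi (by omega) hi2
      have eA2 : Uz * a (i+1) = a (i+2) * Uz := shift_a_asc h (i+2) (i+1) (by omega) (by omega) hi2
      have key : u (i+2) * a (i+1) * a (i+2) * u (i+1) * Uz =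
          (a (i+1) * a (i+2)) * Uz := by
        calc u (i+2) * a (i+1) * a (i+2) * u (i+1) * Uz
            = u (i+2) * a (i+1) * a (i+2) * (Uz * u i) := by rw [eU1]; group
          _ = u (i+2) * a (i+1) * (Uz * a (i+1)) * u i := by rw [eA2]; group
          _ = u (i+2) * (Uz * a i) * a (i+1) * u i := by rw [eA1]; group
          _ = (Uz * u (i+1)) * a i * a (i+1) * u i := by rw [eU2]; group
          _ = Uz * (u (i+1) * a i * a (i+1) * u i) := by group
          _ = Uz * (a i * a (i+1)) := by rw [ih hi1]
          _ = (Uz * a i) * a (i+1) := by group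
          _ = a (i+1) * (Uz * a (i+1)) := by rw [eA1]; group
          _ = a (i+1) * (a (i+2) * Uz) := by rw [eA2]
          _ = (a (i+1) * a (i+2)) * Uz := by group
      exact mul_right_cancel key

/-- rearranged C2: `a k * u (k+1) = u (k+1) * u k * a (k+1) * (u k)⁻¹`. -/
lemma rel_c2_conj (h : Rels n a u) {k : ℕ} (h1 : 1 ≤ k) (h2 : k + 1 ≤ n) :
    a k * u (k+1) = u (k+1) * u k * a (k+1) * (u k)⁻¹ := by
  have := h.c2 k h1 h2
  calc a k * u (k+1) = (a k * u (k+1) * u k) * (u k)⁻¹ := by group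
    _ = u (k+1) * u k * a (k+1) * (u k)⁻¹ := by rw [this]

/-- rearranged shifted C5. -/
lemma rel_c5_form (h : Rels n a u) (hn : 2 ≤ n) {k : ℕ} (h1 : 1 ≤ k) (h2 : k + 1 ≤ n) :
    a (k+1) * (u k)⁻¹ * (a (k+1))⁻¹ * (a k)⁻¹ = (a k)⁻¹ * u (k+1) := by
  have h5 := rel_c5 h hn k h1 h2
  have key : (a k)⁻¹ * u (k+1) = a (k+1) * (u k)⁻¹ * (a (k+1))⁻¹ * (a k)⁻¹ := by
    calc (a k)⁻¹ * u (k+1)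
        = (a k)⁻¹ * (u (k+1) * a k * a (k+1) * u k) * ((u k)⁻¹ * (a (k+1))⁻¹ * (a k)⁻¹) := by
          group
      _ = (a k)⁻¹ * (a k * a (k+1)) * ((u k)⁻¹ * (a (k+1))⁻¹ * (a k)⁻¹) := by rw [h5]
      _ = a (k+1) * (u k)⁻¹ * (a (k+1))⁻¹ * (a k)⁻¹ := by group
  exact key.symm


/-- `a i * V_k = V_k * a (i+1)` for `i + 1 ≤ k`. -/
lemma shift_a_desc (h : Rels n a u) :
    ∀ k i, 1 ≤ i → i + 1 ≤ k → k ≤ n → a i * prodDesc u k = prodDesc u k * a (i+1) := by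
  intro k
  induction k with
  | zero => intro i h1 h2 h3; omega
  | succ k ih =>
      intro i h1 h2 h3
      rcases Nat.lt_or_ge i k with hlt | hge
      · rw [prodDesc_succ, ← mul_assoc,
          h.au_comm i (k+1) h1 (by omega) (by omega) h3 (Or.inl (by omega)), mul_assoc,
          ih i h1 (by omega) (by omega), ← mul_assoc]
      · have him : i = k := by omega
        subst him
        obtain ⟨j, rfl⟩ : ∃ j, i = j + 1 := ⟨i - 1, by omega⟩
        rw [prodDesc_succ, prodDesc_succ]
        have hb : a (j+1) * (u (j+2) * u (j+1)) = u (j+2) * u (j+1) * a (j+2) := by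
          have := h.c2 (j+1) (by omega) (by omega)
          calc a (j+1) * (u (j+2) * u (j+1)) = a (j+1) * u (j+2) * u (j+1) := by group
            _ = u (j+2) * u (j+1) * a (j+2) := this
        have hc : prodDesc u j * a (j+2) = a (j+2) * prodDesc u j :=
          prodDesc_comm (fun t ht1 ht2 =>
            (h.au_comm (j+2) t (by omega) (by omega) ht1 (by omega) (Or.inr (by omega))).symm)
        calc a (j+1) * (u (j+2) * (u (j+1) * prodDesc u j))
            = (a (j+1) * (u (j+2) * u (j+1))) * prodDesc u j := by group
          _ = (u (j+2) * u (j+1) * a (j+2)) * prodDesc u j := by rw [hb]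
          _ = u (j+2) * u (j+1) * (a (j+2) * prodDesc u j) := by group
          _ = u (j+2) * u (j+1) * (prodDesc u j * a (j+2)) := by rw [hc]
          _ = u (j+2) * (u (j+1) * prodDesc u j) * a (j+2) := by group

/-- `u t * V_k = V_k * u (t+1)` for `t + 1 ≤ k`. -/
lemma shift_u_desc (h : Rels n a u) :
    ∀ k t, 1 ≤ t → t + 1 ≤ k → k ≤ n → u t * prodDesc u k = prodDesc u k * u (t+1) := by
  intro k
  induction k with
  | zero => intro t h1 h2 h3; omega
  | succ k ih =>
      intro t h1 h2 h3
      rcases Nat.lt_or_ge t k with hlt | hge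
      · rw [prodDesc_succ, ← mul_assoc,
          h.u_comm t (k+1) h1 (by omega) (by omega), mul_assoc,
          ih t h1 (by omega) (by omega), ← mul_assoc]
      · have him : t = k := by omega
        subst him
        obtain ⟨j, rfl⟩ : ∃ j, t = j + 1 := ⟨t - 1, by omega⟩
        rw [prodDesc_succ, prodDesc_succ]
        have hb : u (j+1) * u (j+2) * u (j+1) = u (j+2) * u (j+1) * u (j+2) :=
          h.u_braid (j+1) (by omega) (by omega)
        have hc : prodDesc u j * u (j+2) = u (j+2) * prodDesc u j :=
          prodDesc_comm (fun s hs1 hs2 => h.u_comm s (j+2) hs1 (by omega) (by omega))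
        calc u (j+1) * (u (j+2) * (u (j+1) * prodDesc u j))
            = (u (j+1) * u (j+2) * u (j+1)) * prodDesc u j := by group
          _ = (u (j+2) * u (j+1) * u (j+2)) * prodDesc u j := by rw [hb]
          _ = u (j+2) * u (j+1) * (u (j+2) * prodDesc u j) := by group
          _ = u (j+2) * u (j+1) * (prodDesc u j * u (j+2)) := by rw [hc]
          _ = u (j+2) * (u (j+1) * prodDesc u j) * u (j+2) := by group

/-- `V_k * a (k+1) = u (k+1)⁻¹ * (a k * (u (k+1) * V_k))`. -/
lemma rel_m2 (h : Rels n a u) {k : ℕ} (h1 : 1 ≤ k) (h2 : k + 1 ≤ n) :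
    prodDesc u k * a (k+1) = (u (k+1))⁻¹ * (a k * (u (k+1) * prodDesc u k)) := by
  obtain ⟨j, rfl⟩ : ∃ j, k = j + 1 := ⟨k - 1, by omega⟩
  rw [prodDesc_succ]
  have hc : prodDesc u j * a (j+2) = a (j+2) * prodDesc u j :=
    prodDesc_comm (fun t ht1 ht2 =>
      (h.au_comm (j+2) t (by omega) (by omega) ht1 (by omega) (Or.inr (by omega))).symm)
  have hb : u (j+1) * a (j+2) = (u (j+2))⁻¹ * a (j+1) * u (j+2) * u (j+1) := by
    have := h.c2 (j+1) (by omega) (by omega)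
    calc u (j+1) * a (j+2)
        = (u (j+2))⁻¹ * (u (j+2) * u (j+1) * a (j+2)) := by group
      _ = (u (j+2))⁻¹ * (a (j+1) * u (j+2) * u (j+1)) := by rw [← this]
      _ = (u (j+2))⁻¹ * a (j+1) * u (j+2) * u (j+1) := by group
  calc u (j+1) * prodDesc u j * a (j+2)
      = u (j+1) * (prodDesc u j * a (j+2)) := by group
    _ = u (j+1) * (a (j+2) * prodDesc u j) := by rw [hc]
    _ = (u (j+1) * a (j+2)) * prodDesc u j := by group
    _ = ((u (j+2))⁻¹ * a (j+1) * u (j+2) * u (j+1)) * prodDesc u j := by rw [hb]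
    _ = (u (j+2))⁻¹ * (a (j+1) * (u (j+2) * (u (j+1) * prodDesc u j))) := by group

/-- braid move: `u k * (u (k+1) * V_k) = u (k+1) * V_k * u (k+1)`. -/
lemma rel_lbraid (h : Rels n a u) {k : ℕ} (h1 : 1 ≤ k) (h2 : k + 1 ≤ n) :
    u k * (u (k+1) * prodDesc u k) = u (k+1) * prodDesc u k * u (k+1) := by
  obtain ⟨j, rfl⟩ : ∃ j, k = j + 1 := ⟨k - 1, by omega⟩
  rw [prodDesc_succ]
  have hb : u (j+1) * u (j+2) * u (j+1) = u (j+2) * u (j+1) * u (j+2) :=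
    h.u_braid (j+1) (by omega) (by omega)
  have hc : prodDesc u j * u (j+2) = u (j+2) * prodDesc u j :=
    prodDesc_comm (fun s hs1 hs2 => h.u_comm s (j+2) hs1 (by omega) (by omega))
  calc u (j+1) * (u (j+2) * (u (j+1) * prodDesc u j))
      = (u (j+1) * u (j+2) * u (j+1)) * prodDesc u j := by group
    _ = (u (j+2) * u (j+1) * u (j+2)) * prodDesc u j := by rw [hb]
    _ = u (j+2) * u (j+1) * (u (j+2) * prodDesc u j) := by group
    _ = u (j+2) * u (j+1) * (prodDesc u j * u (j+2)) := by rw [hc]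
    _ = u (j+2) * (u (j+1) * prodDesc u j) * u (j+2) := by group

/-- `ascFrom u s m * V_k = V_k * ascFrom u (s+1) m` for `s + m + 1 ≤ k`. -/
lemma shift_ascFrom_desc (h : Rels n a u) {k : ℕ} (hk : k ≤ n) :
    ∀ m s, 1 ≤ s → s + m + 1 ≤ k →
      ascFrom u s m * prodDesc u k = prodDesc u k * ascFrom u (s+1) m := by
  intro m
  induction m with
  | zero => intro s h1 h2; simp
  | succ m ih =>
      intro s h1 h2
      have e1 : u (m+s+1) * prodDesc u k = prodDesc u k * u (m+s+2) := by
        have := shift_u_desc h k (m+s+1) (by omega) (by omega) hk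
        have harith : m + s + 1 + 1 = m + s + 2 := rfl
        rwa [harith] at this
      have e2 : ascFrom u (s+1) (m+1) = ascFrom u (s+1) m * u (m+s+2) := by
        have := ascFrom_succ u (s+1) m
        have harith : m + (s+1) + 1 = m + s + 2 := by omega
        rwa [harith] at this
      calc ascFrom u s (m+1) * prodDesc u k
          = ascFrom u s m * (u (m+s+1) * prodDesc u k) := by rw [ascFrom_succ]; group
        _ = ascFrom u s m * (prodDesc u k * u (m+s+2)) := by rw [e1]
        _ = (ascFrom u s m * prodDesc u k) * u (m+s+2) := by group
        _ = (prodDesc u k * ascFrom u (s+1) m) * u (m+s+2) := by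
            rw [ih s h1 (by omega)]
        _ = prodDesc u k * (ascFrom u (s+1) m * u (m+s+2)) := by group
        _ = prodDesc u k * ascFrom u (s+1) (m+1) := by rw [e2]


/-- Key lemma (J): pushing `a (k+1)` through powers of `V_k`. -/
lemma rel_J (h : Rels n a u) {k : ℕ} (hk1 : 1 ≤ k) (hk2 : k + 1 ≤ n) :
    ∀ d i, 1 ≤ i → i + d = k →
      ascFrom u i d * (u (k+1) * (prodDesc u k)^(d+1) * a (k+1)) =
        a i * (u (k+1) * prodDesc u k)^(d+1) := by
  intro d
  induction d with
  | zero =>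
      intro i h1 h2
      have hik : i = k := by omega
      subst hik
      have m2 := rel_m2 h hk1 hk2
      calc ascFrom u i 0 * (u (i+1) * (prodDesc u i)^(0+1) * a (i+1))
          = u (i+1) * (prodDesc u i * a (i+1)) := by rw [ascFrom_zero, pow_one]; group
        _ = u (i+1) * ((u (i+1))⁻¹ * (a i * (u (i+1) * prodDesc u i))) := by rw [m2]
        _ = a i * (u (i+1) * prodDesc u i)^(0+1) := by rw [pow_one]; group
  | succ d ih =>
      intro i h1 h2
      have f1 : ascFrom u i (d+1) = ascFrom u i d * u k := by
        have := ascFrom_succ u i d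
        have harith : d + i + 1 = k := by omega
        rwa [harith] at this
      have f2 := rel_lbraid h (by omega : 1 ≤ k) hk2
      have f4 : ascFrom u i d * prodDesc u k = prodDesc u k * ascFrom u (i+1) d :=
        shift_ascFrom_desc h (by omega) d i h1 (by omega)
      have f4' : prodDesc u k * (ascFrom u (i+1) d)⁻¹ = (ascFrom u i d)⁻¹ * prodDesc u k := by
        calc prodDesc u k * (ascFrom u (i+1) d)⁻¹
            = (ascFrom u i d)⁻¹ * (ascFrom u i d * prodDesc u k) * (ascFrom u (i+1) d)⁻¹ := by
              group
          _ = (ascFrom u i d)⁻¹ * (prodDesc u k * ascFrom u (i+1) d) * (ascFrom u (i+1) d)⁻¹ := by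
              rw [f4]
          _ = (ascFrom u i d)⁻¹ * prodDesc u k := by group
      have f5' : prodDesc u k * a (i+1) = a i * prodDesc u k :=
        (shift_a_desc h k i h1 (by omega) (by omega)).symm
      have f6 : ascFrom u i d * u (k+1) = u (k+1) * ascFrom u i d :=
        ascFrom_comm (fun t ht => h.u_comm (t+i+1) (k+1) (by omega) (by omega) (by omega))
      have f7 : a i * u (k+1) = u (k+1) * a i :=
        h.au_comm i (k+1) h1 (by omega) (by omega) (by omega) (Or.inl (by omega))
      have f3 : u (k+1) * (prodDesc u k)^(d+1) * a (k+1) =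
          (ascFrom u (i+1) d)⁻¹ * (a (i+1) * (u (k+1) * prodDesc u k)^(d+1)) := by
        calc u (k+1) * (prodDesc u k)^(d+1) * a (k+1)
            = (ascFrom u (i+1) d)⁻¹ *
                (ascFrom u (i+1) d * (u (k+1) * (prodDesc u k)^(d+1) * a (k+1))) := by group
          _ = (ascFrom u (i+1) d)⁻¹ * (a (i+1) * (u (k+1) * prodDesc u k)^(d+1)) := by
              rw [ih (i+1) (by omega) (by omega)]
      calc ascFrom u i (d+1) * (u (k+1) * (prodDesc u k)^(d+1+1) * a (k+1))
          = ascFrom u i d * (u k * (u (k+1) * prodDesc u k)) *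
              ((prodDesc u k)^(d+1) * a (k+1)) := by rw [f1, pow_succ']; group
        _ = ascFrom u i d * (u (k+1) * prodDesc u k * u (k+1)) *
              ((prodDesc u k)^(d+1) * a (k+1)) := by rw [f2]
        _ = ascFrom u i d * (u (k+1) * prodDesc u k) *
              (u (k+1) * (prodDesc u k)^(d+1) * a (k+1)) := by group
        _ = ascFrom u i d * (u (k+1) * prodDesc u k) *
              ((ascFrom u (i+1) d)⁻¹ * (a (i+1) * (u (k+1) * prodDesc u k)^(d+1))) := by
            rw [f3]
        _ = ascFrom u i d * u (k+1) * (prodDesc u k * (ascFrom u (i+1) d)⁻¹) *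
              (a (i+1) * (u (k+1) * prodDesc u k)^(d+1)) := by group
        _ = ascFrom u i d * u (k+1) * ((ascFrom u i d)⁻¹ * prodDesc u k) *
              (a (i+1) * (u (k+1) * prodDesc u k)^(d+1)) := by rw [f4']
        _ = (ascFrom u i d * u (k+1)) * (ascFrom u i d)⁻¹ * (prodDesc u k * a (i+1)) *
              (u (k+1) * prodDesc u k)^(d+1) := by group
        _ = (u (k+1) * ascFrom u i d) * (ascFrom u i d)⁻¹ * (a i * prodDesc u k) *
              (u (k+1) * prodDesc u k)^(d+1) := by rw [f6, f5']
        _ = (u (k+1) * a i) * (prodDesc u k * (u (k+1) * prodDesc u k)^(d+1)) := by group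
        _ = (a i * u (k+1)) * (prodDesc u k * (u (k+1) * prodDesc u k)^(d+1)) := by rw [← f7]
        _ = a i * ((u (k+1) * prodDesc u k) * (u (k+1) * prodDesc u k)^(d+1)) := by
            generalize (u (k+1) * prodDesc u k)^(d+1) = X
            group
        _ = a i * (u (k+1) * prodDesc u k)^(d+1+1) := by rw [← pow_succ']


/-- Key lemma (RED): `A_k * u (k+1) * a (k+1)⁻¹ * A_k⁻¹ = V_(k+1) * a 1⁻¹ * (u 2 ⋯ u (k+1))`. -/
lemma rel_red (h : Rels n a u) (hn : 2 ≤ n) :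
    ∀ k, k + 1 ≤ n →
      prodAsc a k * u (k+1) * (a (k+1))⁻¹ * (prodAsc a k)⁻¹ =
        prodDesc u (k+1) * (a 1)⁻¹ * ascFrom u 1 k := by
  intro k
  induction k with
  | zero => intro _; simp
  | succ k ih =>
      intro hk2
      have hIH := ih (by omega)
      have g2 : a (k+1) * u (k+1+1) =
          u (k+1+1) * u (k+1) * a (k+1+1) * (u (k+1))⁻¹ :=
        rel_c2_conj h (by omega) hk2
      have g3 : a (k+1+1) * (u (k+1))⁻¹ * (a (k+1+1))⁻¹ * (a (k+1))⁻¹ =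
          (a (k+1))⁻¹ * u (k+1+1) :=
        rel_c5_form h hn (by omega) hk2
      have g4 : prodAsc a k * u (k+1+1) = u (k+1+1) * prodAsc a k :=
        prodAsc_comm (fun t ht1 ht2 =>
          h.au_comm t (k+1+1) ht1 (by omega) (by omega) (by omega) (Or.inl (by omega)))
      have g4' : u (k+1+1) * (prodAsc a k)⁻¹ = (prodAsc a k)⁻¹ * u (k+1+1) := by
        calc u (k+1+1) * (prodAsc a k)⁻¹
            = (prodAsc a k)⁻¹ * (prodAsc a k * u (k+1+1)) * (prodAsc a k)⁻¹ := by group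
          _ = (prodAsc a k)⁻¹ * (u (k+1+1) * prodAsc a k) * (prodAsc a k)⁻¹ := by rw [g4]
          _ = (prodAsc a k)⁻¹ * u (k+1+1) := by group
      calc prodAsc a (k+1) * u (k+1+1) * (a (k+1+1))⁻¹ * (prodAsc a (k+1))⁻¹
          = prodAsc a k * (a (k+1) * u (k+1+1)) * (a (k+1+1))⁻¹ *
              ((a (k+1))⁻¹ * (prodAsc a k)⁻¹) := by rw [prodAsc_succ]; group
        _ = prodAsc a k * (u (k+1+1) * u (k+1) * a (k+1+1) * (u (k+1))⁻¹) * (a (k+1+1))⁻¹ *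
              ((a (k+1))⁻¹ * (prodAsc a k)⁻¹) := by rw [g2]
        _ = (prodAsc a k * u (k+1+1)) * u (k+1) *
              (a (k+1+1) * (u (k+1))⁻¹ * (a (k+1+1))⁻¹ * (a (k+1))⁻¹) *
              (prodAsc a k)⁻¹ := by group
        _ = (u (k+1+1) * prodAsc a k) * u (k+1) * ((a (k+1))⁻¹ * u (k+1+1)) *
              (prodAsc a k)⁻¹ := by rw [g4, g3]
        _ = u (k+1+1) * (prodAsc a k * u (k+1) * (a (k+1))⁻¹) *
              (u (k+1+1) * (prodAsc a k)⁻¹) := by group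
        _ = u (k+1+1) * (prodAsc a k * u (k+1) * (a (k+1))⁻¹) *
              ((prodAsc a k)⁻¹ * u (k+1+1)) := by rw [g4']
        _ = u (k+1+1) * (prodAsc a k * u (k+1) * (a (k+1))⁻¹ * (prodAsc a k)⁻¹) *
              u (k+1+1) := by group
        _ = u (k+1+1) * (prodDesc u (k+1) * (a 1)⁻¹ * ascFrom u 1 k) * u (k+1+1) := by
            rw [hIH]
        _ = (u (k+1+1) * prodDesc u (k+1)) * (a 1)⁻¹ * (ascFrom u 1 k * u (k+1+1)) := by
            group
        _ = prodDesc u (k+1+1) * (a 1)⁻¹ * ascFrom u 1 (k+1) := by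
            rw [← prodDesc_succ, ← ascFrom_succ]

/-- The central chain (γ): `A_k * V_k * A_k = V_k ^ k`. -/
lemma rel_gam (h : Rels n a u) (hn : 2 ≤ n) :
    ∀ k, 1 ≤ k → k ≤ n →
      prodAsc a k * prodDesc u k * prodAsc a k = (prodDesc u k)^k := by
  intro k hk
  induction k, hk using Nat.le_induction with
  | base =>
      intro _
      simpa [pow_one] using h.c4
  | succ K hK ihK =>
      intro hK2
      obtain ⟨j, rfl⟩ : ∃ j, K = j + 1 := ⟨K - 1, by omega⟩
      have IH := ihK (by omega)
      have e0 : prodDesc u (j+1) * prodAsc a (j+1) =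
          (prodAsc a (j+1))⁻¹ * (prodDesc u (j+1))^(j+1) := by
        calc prodDesc u (j+1) * prodAsc a (j+1)
            = (prodAsc a (j+1))⁻¹ *
                (prodAsc a (j+1) * prodDesc u (j+1) * prodAsc a (j+1)) := by group
          _ = (prodAsc a (j+1))⁻¹ * (prodDesc u (j+1))^(j+1) := by rw [IH]
      have e1 : a (j+1+1) * u (j+1+1) = u (j+1+1) * (a (j+1+1))⁻¹ :=
        rel_c4_right h (by omega) hK2
      have e2 : a (j+1) * u (j+1+1) =
          u (j+1+1) * u (j+1) * a (j+1+1) * (u (j+1))⁻¹ :=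
        rel_c2_conj h (by omega) hK2
      have e3 : a (j+1+1) * (u (j+1))⁻¹ * (a (j+1+1))⁻¹ * (a (j+1))⁻¹ =
          (a (j+1))⁻¹ * u (j+1+1) :=
        rel_c5_form h hn (by omega) hK2
      have e4 : prodAsc a j * u (j+1+1) = u (j+1+1) * prodAsc a j :=
        prodAsc_comm (fun t ht1 ht2 =>
          h.au_comm t (j+1+1) ht1 (by omega) (by omega) (by omega) (Or.inl (by omega)))
      have e4' : u (j+1+1) * (prodAsc a j)⁻¹ = (prodAsc a j)⁻¹ * u (j+1+1) := by
        calc u (j+1+1) * (prodAsc a j)⁻¹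
            = (prodAsc a j)⁻¹ * (prodAsc a j * u (j+1+1)) * (prodAsc a j)⁻¹ := by group
          _ = (prodAsc a j)⁻¹ * (u (j+1+1) * prodAsc a j) * (prodAsc a j)⁻¹ := by rw [e4]
          _ = (prodAsc a j)⁻¹ * u (j+1+1) := by group
      have e5 : prodAsc a j * u (j+1) * (a (j+1))⁻¹ * (prodAsc a j)⁻¹ =
          prodDesc u (j+1) * (a 1)⁻¹ * ascFrom u 1 j :=
        rel_red h hn j (by omega)
      have e6 : ascFrom u 1 j * (u (j+1+1) * (prodDesc u (j+1))^(j+1) * a (j+1+1)) =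
          a 1 * (u (j+1+1) * prodDesc u (j+1))^(j+1) :=
        rel_J h (by omega) hK2 j 1 (by omega) (by omega)
      calc prodAsc a (j+1+1) * prodDesc u (j+1+1) * prodAsc a (j+1+1)
          = (prodAsc a (j+1) * a (j+1+1)) * (u (j+1+1) * prodDesc u (j+1)) *
              (prodAsc a (j+1) * a (j+1+1)) := by rw [prodAsc_succ, prodDesc_succ]
        _ = prodAsc a (j+1) * a (j+1+1) * u (j+1+1) *
              (prodDesc u (j+1) * prodAsc a (j+1)) * a (j+1+1) := by group
        _ = prodAsc a (j+1) * a (j+1+1) * u (j+1+1) *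
              ((prodAsc a (j+1))⁻¹ * (prodDesc u (j+1))^(j+1)) * a (j+1+1) := by rw [e0]
        _ = prodAsc a (j+1) * (a (j+1+1) * u (j+1+1)) *
              ((prodAsc a (j+1))⁻¹ * ((prodDesc u (j+1))^(j+1) * a (j+1+1))) := by group
        _ = prodAsc a (j+1) * (u (j+1+1) * (a (j+1+1))⁻¹) *
              ((prodAsc a (j+1))⁻¹ * ((prodDesc u (j+1))^(j+1) * a (j+1+1))) := by rw [e1]
        _ = prodAsc a j * (a (j+1) * u (j+1+1)) *
              ((a (j+1+1))⁻¹ * ((a (j+1))⁻¹ * (prodAsc a j)⁻¹)) *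
              ((prodDesc u (j+1))^(j+1) * a (j+1+1)) := by rw [prodAsc_succ]; group
        _ = prodAsc a j * (u (j+1+1) * u (j+1) * a (j+1+1) * (u (j+1))⁻¹) *
              ((a (j+1+1))⁻¹ * ((a (j+1))⁻¹ * (prodAsc a j)⁻¹)) *
              ((prodDesc u (j+1))^(j+1) * a (j+1+1)) := by rw [e2]
        _ = (prodAsc a j * u (j+1+1)) * u (j+1) *
              (a (j+1+1) * (u (j+1))⁻¹ * (a (j+1+1))⁻¹ * (a (j+1))⁻¹) *
              ((prodAsc a j)⁻¹ * ((prodDesc u (j+1))^(j+1) * a (j+1+1))) := by group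
        _ = (u (j+1+1) * prodAsc a j) * u (j+1) * ((a (j+1))⁻¹ * u (j+1+1)) *
              ((prodAsc a j)⁻¹ * ((prodDesc u (j+1))^(j+1) * a (j+1+1))) := by rw [e4, e3]
        _ = u (j+1+1) * (prodAsc a j * u (j+1) * (a (j+1))⁻¹) *
              (u (j+1+1) * (prodAsc a j)⁻¹) *
              ((prodDesc u (j+1))^(j+1) * a (j+1+1)) := by group
        _ = u (j+1+1) * (prodAsc a j * u (j+1) * (a (j+1))⁻¹) *
              ((prodAsc a j)⁻¹ * u (j+1+1)) *
              ((prodDesc u (j+1))^(j+1) * a (j+1+1)) := by rw [e4']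
        _ = u (j+1+1) * (prodAsc a j * u (j+1) * (a (j+1))⁻¹ * (prodAsc a j)⁻¹) *
              (u (j+1+1) * (prodDesc u (j+1))^(j+1) * a (j+1+1)) := by group
        _ = u (j+1+1) * (prodDesc u (j+1) * (a 1)⁻¹ * ascFrom u 1 j) *
              (u (j+1+1) * (prodDesc u (j+1))^(j+1) * a (j+1+1)) := by rw [e5]
        _ = u (j+1+1) * prodDesc u (j+1) * (a 1)⁻¹ *
              (ascFrom u 1 j * (u (j+1+1) * (prodDesc u (j+1))^(j+1) * a (j+1+1))) := by
            group
        _ = u (j+1+1) * prodDesc u (j+1) * (a 1)⁻¹ *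
              (a 1 * (u (j+1+1) * prodDesc u (j+1))^(j+1)) := by rw [e6]
        _ = (u (j+1+1) * prodDesc u (j+1)) * (u (j+1+1) * prodDesc u (j+1))^(j+1) := by
            generalize (u (j+1+1) * prodDesc u (j+1))^(j+1) = X
            group
        _ = (u (j+1+1) * prodDesc u (j+1))^(j+1+1) := by rw [← pow_succ']
        _ = (prodDesc u (j+1+1))^(j+1+1) := by rw [← prodDesc_succ]


/-- `A_k * a j = a (j+1) * A_k` for `j + 1 ≤ k`. -/
lemma shift_a_afull (h : Rels n a u) :
    ∀ k j, 1 ≤ j → j + 1 ≤ k → k ≤ n → prodAsc a k * a j = a (j+1) * prodAsc a k := by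
  intro k
  induction k with
  | zero => intro j h1 h2 h3; omega
  | succ k ih =>
      intro j h1 h2 h3
      rcases Nat.lt_or_ge j k with hlt | hge
      · rw [prodAsc_succ, mul_assoc, ← h.a_comm j (k+1) h1 (by omega) h3, ← mul_assoc,
          ih j h1 (by omega) (by omega), mul_assoc]
      · have hjk : j = k := by omega
        subst hjk
        obtain ⟨t, rfl⟩ : ∃ t, j = t + 1 := ⟨j - 1, by omega⟩
        rw [prodAsc_succ, prodAsc_succ]
        have hb : a (t+1) * a (t+2) * a (t+1) = a (t+2) * a (t+1) * a (t+2) :=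
          h.a_braid (t+1) (by omega) (by omega)
        have hc : prodAsc a t * a (t+2) = a (t+2) * prodAsc a t :=
          prodAsc_comm (fun s hs1 hs2 => h.a_comm s (t+2) hs1 (by omega) (by omega))
        calc prodAsc a t * a (t+1) * a (t+2) * a (t+1)
            = prodAsc a t * (a (t+1) * a (t+2) * a (t+1)) := by group
          _ = prodAsc a t * (a (t+2) * a (t+1) * a (t+2)) := by rw [hb]
          _ = (prodAsc a t * a (t+2)) * (a (t+1) * a (t+2)) := by group
          _ = (a (t+2) * prodAsc a t) * (a (t+1) * a (t+2)) := by rw [hc]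
          _ = a (t+2) * (prodAsc a t * a (t+1) * a (t+2)) := by group

/-- The core computation: `A² = U²`. -/
lemma main_core (h : Rels n a u) (hn : 2 ≤ n)
    (hB4a : prodDesc u n * prodAsc u n = 1)
    (hB3 : (prodAsc u n)^(n+1) = 1)
    (hD : a 1 * (ascFrom a 1 (n-1) *
            (((List.range (n-1)).reverse).map (fun i => u (i+2))).prod) * a 1 =
          ascFrom a 1 (n-1) * (((List.range (n-1)).reverse).map (fun i => u (i+2))).prod) :
    (prodAsc a n)^2 = (prodAsc u n)^2 := by
  obtain ⟨m, rfl⟩ : ∃ m, n = m + 1 := ⟨n - 1, by omega⟩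
  have hm1 : 1 ≤ m := by omega
  have hn1 : (m + 1) - 1 = m := by omega
  rw [hn1] at hD
  have hV : prodDesc u (m+1) = (prodAsc u (m+1))⁻¹ := eq_inv_of_mul_eq_one_left hB4a
  have hgam : prodAsc a (m+1) * prodDesc u (m+1) * prodAsc a (m+1) =
      (prodDesc u (m+1))^(m+1) := rel_gam h hn (m+1) (by omega) le_rfl
  have hUpow : ((prodAsc u (m+1))^(m+1))⁻¹ = prodAsc u (m+1) := by
    have h1 : (prodAsc u (m+1))^(m+1) * prodAsc u (m+1) = 1 := by
      rw [← pow_succ]; exact hB3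
    exact inv_eq_of_mul_eq_one_right h1
  have hVpow : (prodDesc u (m+1))^(m+1) = prodAsc u (m+1) := by
    rw [hV, inv_pow]; exact hUpow
  have hAUA : prodAsc a (m+1) * (prodAsc u (m+1))⁻¹ * prodAsc a (m+1) =
      prodAsc u (m+1) := by
    calc prodAsc a (m+1) * (prodAsc u (m+1))⁻¹ * prodAsc a (m+1)
        = prodAsc a (m+1) * prodDesc u (m+1) * prodAsc a (m+1) := by rw [hV]
      _ = (prodDesc u (m+1))^(m+1) := hgam
      _ = prodAsc u (m+1) := hVpow
  -- commutation of A with V, via relation (D)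
  have hDw : a 1 * (ascFrom a 1 m * (((List.range m).reverse).map (fun i => u (i+2))).prod) =
      (ascFrom a 1 m * (((List.range m).reverse).map (fun i => u (i+2))).prod) * (a 1)⁻¹ := by
    calc a 1 * (ascFrom a 1 m * (((List.range m).reverse).map (fun i => u (i+2))).prod)
        = (a 1 * (ascFrom a 1 m * (((List.range m).reverse).map (fun i => u (i+2))).prod)
            * a 1) * (a 1)⁻¹ := by group
      _ = (ascFrom a 1 m * (((List.range m).reverse).map (fun i => u (i+2))).prod)
            * (a 1)⁻¹ := by rw [hD]
  have hc4l : u 1 * a 1 = (a 1)⁻¹ * u 1 := rel_c4_left h (by omega) (by omega)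
  have hr1 : (prodAsc a (m+1) * prodDesc u (m+1)) * a 1 =
      a 1 * (prodAsc a (m+1) * prodDesc u (m+1)) := by
    rw [prodAsc_head, prodDesc_snoc]
    calc (a 1 * ascFrom a 1 m) *
          ((((List.range m).reverse).map (fun i => u (i+2))).prod * u 1) * a 1
        = a 1 * (ascFrom a 1 m * (((List.range m).reverse).map (fun i => u (i+2))).prod)
          * (u 1 * a 1) := by group
      _ = a 1 * (ascFrom a 1 m * (((List.range m).reverse).map (fun i => u (i+2))).prod)
          * ((a 1)⁻¹ * u 1) := by rw [hc4l]
      _ = a 1 * ((ascFrom a 1 m * (((List.range m).reverse).map (fun i => u (i+2))).prod)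
          * (a 1)⁻¹) * u 1 := by group
      _ = a 1 * (a 1 * (ascFrom a 1 m
          * (((List.range m).reverse).map (fun i => u (i+2))).prod)) * u 1 := by rw [← hDw]
      _ = a 1 * ((a 1 * ascFrom a 1 m) *
          ((((List.range m).reverse).map (fun i => u (i+2))).prod * u 1)) := by group
  have hri : ∀ i, 1 ≤ i → i ≤ m + 1 →
      a i * (prodAsc a (m+1) * prodDesc u (m+1)) =
        (prodAsc a (m+1) * prodDesc u (m+1)) * a i := by
    intro i h1 h2
    rcases Nat.lt_or_ge i 2 with hi2 | hi2
    · have hi1 : i = 1 := by omega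
      subst hi1
      exact hr1.symm
    · obtain ⟨t, rfl⟩ : ∃ t, i = t + 2 := ⟨i - 2, by omega⟩
      have s1 : a (t+1) * prodDesc u (m+1) = prodDesc u (m+1) * a (t+2) := by
        have := shift_a_desc h (m+1) (t+1) (by omega) (by omega) le_rfl
        rwa [show t+1+1 = t+2 from rfl] at this
      have s2 : prodAsc a (m+1) * a (t+1) = a (t+2) * prodAsc a (m+1) := by
        have := shift_a_afull h (m+1) (t+1) (by omega) (by omega) le_rfl
        rwa [show t+1+1 = t+2 from rfl] at this
      have key : (prodAsc a (m+1) * prodDesc u (m+1)) * a (t+2) =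
          a (t+2) * (prodAsc a (m+1) * prodDesc u (m+1)) := by
        calc (prodAsc a (m+1) * prodDesc u (m+1)) * a (t+2)
            = prodAsc a (m+1) * (prodDesc u (m+1) * a (t+2)) := by rw [mul_assoc]
          _ = prodAsc a (m+1) * (a (t+1) * prodDesc u (m+1)) := by rw [← s1]
          _ = (prodAsc a (m+1) * a (t+1)) * prodDesc u (m+1) := by rw [mul_assoc]
          _ = (a (t+2) * prodAsc a (m+1)) * prodDesc u (m+1) := by rw [s2]
          _ = a (t+2) * (prodAsc a (m+1) * prodDesc u (m+1)) := by rw [mul_assoc]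
      exact key.symm
  have hAr : prodAsc a (m+1) * (prodAsc a (m+1) * prodDesc u (m+1)) =
      (prodAsc a (m+1) * prodDesc u (m+1)) * prodAsc a (m+1) :=
    prodAsc_comm (fun i h1 h2 => hri i h1 h2)
  have hVA : prodDesc u (m+1) * prodAsc a (m+1) = prodAsc a (m+1) * prodDesc u (m+1) := by
    have key : prodAsc a (m+1) * (prodAsc a (m+1) * prodDesc u (m+1)) =
        prodAsc a (m+1) * (prodDesc u (m+1) * prodAsc a (m+1)) := by
      rw [hAr]; group
    exact (mul_left_cancel key).symm
  rw [hV] at hVA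
  have key : prodAsc a (m+1) * prodAsc a (m+1) = prodAsc u (m+1) * prodAsc u (m+1) := by
    calc prodAsc a (m+1) * prodAsc a (m+1)
        = prodAsc u (m+1) * (((prodAsc u (m+1))⁻¹ * prodAsc a (m+1)) * prodAsc a (m+1)) := by
          group
      _ = prodAsc u (m+1) * ((prodAsc a (m+1) * (prodAsc u (m+1))⁻¹) * prodAsc a (m+1)) := by
          rw [hVA]
      _ = prodAsc u (m+1) * (prodAsc a (m+1) * (prodAsc u (m+1))⁻¹ * prodAsc a (m+1)) := by
          group
      _ = prodAsc u (m+1) * prodAsc u (m+1) := by rw [hAUA]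
  rw [pow_two, pow_two]
  exact key

end RelE5Aux

/-- relation (E5): (a_1 ⋯ a_{g-1})² = (u_{g-1} ⋯ u_1)⁻² = (u_1 ⋯ u_{g-1})². -/
theorem rel_E5 (g : ℕ) (a u : ℕ → G)
    (ha1 : ∀ i j, 1 ≤ i → i + 2 ≤ j → j ≤ g - 1 → a i * a j = a j * a i)
    (ha2 : ∀ i, 1 ≤ i → i + 1 ≤ g - 1 → a i * a (i + 1) * a i = a (i + 1) * a i * a (i + 1))
    (hu1 : ∀ i j, 1 ≤ i → i + 2 ≤ j → j ≤ g - 1 → u i * u j = u j * u i)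
    (hu2 : ∀ i, 1 ≤ i → i + 1 ≤ g - 1 → u i * u (i + 1) * u i = u (i + 1) * u i * u (i + 1))
    (hC1 : ∀ i j, 1 ≤ i → i ≤ g - 1 → 1 ≤ j → j ≤ g - 1 → (i + 2 ≤ j ∨ j + 2 ≤ i) →
      a i * u j = u j * a i)
    (hC2 : ∀ i, 1 ≤ i → i ≤ g - 2 → a i * u (i + 1) * u i = u (i + 1) * u i * a (i + 1))
    (hC3 : ∀ i, 1 ≤ i → i ≤ g - 2 → a (i + 1) * u i * u (i + 1) = u i * u (i + 1) * a i)
    (hC4 : a 1 * u 1 * a 1 = u 1)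
    (hC5 : u 2 * a 1 * a 2 * u 1 = a 1 * a 2)
(hB4a : prodDesc u (g - 1) * prodAsc u (g - 1) = 1)
    (hB3 : (prodAsc u (g - 1)) ^ g = 1)
    (hD : a 1 * (((List.range (g - 2)).map (fun i => a (i + 2))).prod *
            (((List.range (g - 2)).reverse).map (fun i => u (i + 2))).prod) * a 1 =
          ((List.range (g - 2)).map (fun i => a (i + 2))).prod *
            (((List.range (g - 2)).reverse).map (fun i => u (i + 2))).prod)
    :
    (prodAsc a (g - 1)) ^ 2 = ((prodDesc u (g - 1)) ^ 2)⁻¹ ∧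
      (prodAsc a (g - 1)) ^ 2 = (prodAsc u (g - 1)) ^ 2 := by
  rcases Nat.lt_or_ge g 3 with hg | hg
  · interval_cases g
    · constructor <;> simp [prodAsc, prodDesc]
    · constructor <;> simp [prodAsc, prodDesc]
    · have e1 : (2:ℕ) - 1 = 1 := rfl
      have e0 : (2:ℕ) - 2 = 0 := rfl
      rw [e1] at hB4a ⊢
      rw [e0] at hD
      simp only [List.range_zero, List.map_nil, List.reverse_nil, List.prod_nil, mul_one,
        one_mul] at hD
      simp only [RelE5Aux.prodAsc_one, RelE5Aux.prodDesc_one] at hB4a ⊢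
      constructor
      · rw [pow_two, pow_two, hD, hB4a]; simp
      · rw [pow_two, pow_two, hD, hB4a]
  · obtain ⟨n, rfl⟩ : ∃ n, g = n + 1 := ⟨g - 1, by omega⟩
    have hn : 2 ≤ n := by omega
    simp only [Nat.add_sub_cancel] at ha1 ha2 hu1 hu2 hC1 hC2 hC3 hB4a hB3 ⊢
    have hg2 : n + 1 - 2 = n - 1 := by omega
    rw [hg2] at hC2 hC3 hD
    have h : RelE5Aux.Rels n a u :=
      { a_comm := ha1, a_braid := ha2, u_comm := hu1, u_braid := hu2, au_comm := hC1,
        c2 := fun i h1 h2 => hC2 i h1 (by omega), c3 := fun i h1 h2 => hC3 i h1 (by omega),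
        c4 := hC4, c5 := hC5 }
    have hasc : ((List.range (n-1)).map (fun i => a (i + 2))).prod =
        RelE5Aux.ascFrom a 1 (n-1) := rfl
    rw [hasc] at hD
    have key := RelE5Aux.main_core h hn hB4a hB3 hD
    have hV : prodDesc u n = (prodAsc u n)⁻¹ := eq_inv_of_mul_eq_one_left hB4a
    constructor
    · rw [key, hV]; group
    · exact key
end
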